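/- Let F : (0,∞) → (0,∞), δ > 0, m ∈ ℕ, and suppose F(4^(−k−1)) ≤ 1 + δ·(F(4^(−k)))^(3/2) for all k ∈ ℕ, and moreover δ·(F(4^(−k)))^(3/2) ≥ 1 for all integers k with m−ℓ ≤ k ≤ m−1, where 1 ≤ ℓ ≤ m. Then F(4^(−m)) ≤ 1 + (1/2)·(2δ)^(S(ℓ))·(F(4^(ℓ−m)))^((3/2)^ℓ), where S(ℓ) = Σ_{j=0}^{ℓ−1} (3/2)^j. -/

import Mathlib

/-- Inductive claim in the iteration lemma: the recurrence plus the lower bound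
`δ F^(3/2) ≥ 1` on the range of scales `m-ℓ ≤ k ≤ m-1` gives the iterated bound. -/
theorem stmt_3 (F : ℝ → ℝ) (hF : ∀ r : ℝ, 0 < r → 0 < F r)
    (δ : ℝ) (hδ : 0 < δ) (m ℓ : ℕ) (hℓ1 : 1 ≤ ℓ) (hℓm : ℓ ≤ m)
    (hrec : ∀ k : ℕ, F ((4:ℝ) ^ (-(k:ℝ) - 1)) ≤ 1 + δ * (F ((4:ℝ) ^ (-(k:ℝ)))) ^ ((3:ℝ)/2))
    (hlow : ∀ k : ℕ, m - ℓ ≤ k → k ≤ m - 1 → 1 ≤ δ * (F ((4:ℝ) ^ (-(k:ℝ)))) ^ ((3:ℝ)/2)) :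
    F ((4:ℝ) ^ (-(m:ℝ))) ≤
      1 + (1/2) * (2 * δ) ^ (∑ j ∈ Finset.range ℓ, ((3:ℝ)/2) ^ j) *
        (F ((4:ℝ) ^ ((ℓ:ℝ) - m))) ^ (((3:ℝ)/2) ^ ℓ) := by
  have h4 : ∀ x : ℝ, (0:ℝ) < (4:ℝ) ^ x := fun x => Real.rpow_pos_of_pos (by norm_num) x
  revert hℓm hlow
  induction ℓ, hℓ1 using Nat.le_induction with
  | base =>
    intro hℓm hlow
    have h := hrec (m - 1)
    have hc : ((m - 1 : ℕ) : ℝ) = (m : ℝ) - 1 := by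
      have h1 : (1:ℕ) ≤ m := hℓm
      push_cast [h1]; ring
    rw [hc, show -((m:ℝ) - 1) - 1 = -(m:ℝ) by ring,
      show -((m:ℝ) - 1) = (1:ℝ) - m by ring] at h
    refine h.trans (le_of_eq ?_)
    rw [Finset.sum_range_one, pow_zero, Real.rpow_one, pow_one, Nat.cast_one]
    ring
  | succ ℓ hℓ IH =>
    intro hℓm hlow
    push_cast
    have hℓm' : ℓ ≤ m := le_trans (Nat.le_succ ℓ) hℓm
    have hlow' : ∀ k : ℕ, m - ℓ ≤ k → k ≤ m - 1 →
        1 ≤ δ * (F ((4:ℝ) ^ (-(k:ℝ)))) ^ ((3:ℝ)/2) := by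
      intro k hk1 hk2
      exact hlow k (by omega) hk2
    have IH' := IH hℓm' hlow'
    set A := F ((4:ℝ) ^ ((ℓ:ℝ) - m)) with hA
    set B := F ((4:ℝ) ^ ((ℓ:ℝ) + 1 - m)) with hB
    have hApos : 0 < A := hF _ (h4 _)
    have hBpos : 0 < B := hF _ (h4 _)
    have hc : ((m - ℓ - 1 : ℕ) : ℝ) = (m:ℝ) - ℓ - 1 := by
      have h1 : m - ℓ - 1 + (ℓ + 1) = m := by omega
      have h2 := congrArg (Nat.cast : ℕ → ℝ) h1
      push_cast at h2; linarith
    have hrec' := hrec (m - ℓ - 1)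
    rw [hc, show -((m:ℝ) - ℓ - 1) - 1 = (ℓ:ℝ) - m by ring,
      show -((m:ℝ) - ℓ - 1) = (ℓ:ℝ) + 1 - m by ring] at hrec'
    have hlowB := hlow (m - ℓ - 1) (by omega) (by omega)
    rw [hc, show -((m:ℝ) - ℓ - 1) = (ℓ:ℝ) + 1 - m by ring] at hlowB
    have hAB : A ≤ 2 * δ * B ^ ((3:ℝ)/2) := by
      calc A ≤ 1 + δ * B ^ ((3:ℝ)/2) := hrec'
        _ ≤ δ * B ^ ((3:ℝ)/2) + δ * B ^ ((3:ℝ)/2) := by linarith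
        _ = 2 * δ * B ^ ((3:ℝ)/2) := by ring
    have hexp : (0:ℝ) ≤ ((3:ℝ)/2) ^ ℓ := by positivity
    have key : A ^ (((3:ℝ)/2) ^ ℓ) ≤
        (2*δ) ^ (((3:ℝ)/2) ^ ℓ) * B ^ (((3:ℝ)/2) ^ (ℓ+1)) := by
      have h1 : A ^ (((3:ℝ)/2) ^ ℓ) ≤ (2 * δ * B ^ ((3:ℝ)/2)) ^ (((3:ℝ)/2) ^ ℓ) :=
        Real.rpow_le_rpow hApos.le hAB hexp
      refine h1.trans (le_of_eq ?_)
      rw [Real.mul_rpow (by positivity) (Real.rpow_nonneg hBpos.le _),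
        ← Real.rpow_mul hBpos.le,
        show (3:ℝ)/2 * ((3:ℝ)/2) ^ ℓ = ((3:ℝ)/2) ^ (ℓ+1) by ring]
    have hS : (∑ j ∈ Finset.range (ℓ+1), ((3:ℝ)/2) ^ j)
        = (∑ j ∈ Finset.range ℓ, ((3:ℝ)/2) ^ j) + ((3:ℝ)/2) ^ ℓ :=
      Finset.sum_range_succ _ _
    have hcoef : (0:ℝ) ≤ (1/2) * (2*δ) ^ (∑ j ∈ Finset.range ℓ, ((3:ℝ)/2) ^ j) := by
      positivity
    calc F ((4:ℝ) ^ (-(m:ℝ)))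
        ≤ 1 + (1/2) * (2*δ) ^ (∑ j ∈ Finset.range ℓ, ((3:ℝ)/2) ^ j)
            * A ^ (((3:ℝ)/2) ^ ℓ) := IH'
      _ ≤ 1 + (1/2) * (2*δ) ^ (∑ j ∈ Finset.range ℓ, ((3:ℝ)/2) ^ j)
            * ((2*δ) ^ (((3:ℝ)/2) ^ ℓ) * B ^ (((3:ℝ)/2) ^ (ℓ+1))) := by
          nlinarith [mul_le_mul_of_nonneg_left key hcoef]
      _ = 1 + (1/2) * (2*δ) ^ (∑ j ∈ Finset.range (ℓ+1), ((3:ℝ)/2) ^ j)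
            * B ^ (((3:ℝ)/2) ^ (ℓ+1)) := by
          rw [hS, Real.rpow_add (by positivity)]; ring
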